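/- arXiv:2306.01963 — 3 statements merged into one kernel-verified Lean document; each statement's English description precedes it below -/
import Mathlib

section
/- Let (θ₁, φ₁), …, (θ_{n_T}, φ_{n_T}) be independent, each uniformly distributed on [0,2π]², set hᵢ := sin θᵢ·sin φᵢ, and for a real number a and a natural number n_R ≥ 1 define Ω := Σ_{i=1}^{n_T} Σ_{j=1}^{n_T} Σ_{s=1}^{n_R−1} (n_R − s)·cos(s·a·(hᵢ − hⱼ)). Then E[Ω] = n_T·n_R·(n_R − 1)/2 + n_T·(n_T − 1)·Σ_{s=1}^{n_R−1} (n_R − s)·J₀(s·a/2)⁴. -/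
open Real MeasureTheory Finset

/-- Bessel function of the first kind of order zero (integral representation). -/
noncomputable def J₀ (x : ℝ) : ℝ :=
  (1 / (2 * π)) * ∫ t in (0:ℝ)..(2 * π), Real.cos (x * Real.sin t)

noncomputable def B (x : ℝ) : ℝ := ∫ t in (0:ℝ)..(2 * π), Real.cos (x * Real.sin t)

lemma B_cont : Continuous B := by
  apply intervalIntegral.continuous_parametric_intervalIntegral_of_continuous'
  fun_prop

lemma B_neg (x : ℝ) : B (-x) = B x := by
  unfold B
  apply intervalIntegral.integral_congr
  intro t _
  simp only [neg_mul, Real.cos_neg]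

lemma shift_int (f : ℝ → ℝ) (hf : Function.Periodic f (2*π)) (d : ℝ) :
    ∫ t in (0:ℝ)..(2*π), f (t + d) = ∫ t in (0:ℝ)..(2*π), f t := by
  rw [intervalIntegral.integral_comp_add_right]
  have := hf.intervalIntegral_add_eq (0 + d) 0
  simpa [add_comm, add_assoc, add_left_comm] using this

lemma reflect_int (f : ℝ → ℝ) :
    ∫ t in (0:ℝ)..(2*π), f (2*π - t) = ∫ t in (0:ℝ)..(2*π), f t := by
  have := intervalIntegral.integral_comp_sub_left f (2*π) (a := 0) (b := 2*π)
  simpa using this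

lemma odd_sin_int (k : ℝ) : ∫ t in (0:ℝ)..(2*π), Real.sin (k * Real.sin t) = 0 := by
  have h := reflect_int (fun t => Real.sin (k * Real.sin t))
  have h2 : ∀ t, Real.sin (k * Real.sin (2*π - t)) = - Real.sin (k * Real.sin t) := by
    intro t
    rw [show (2*π - t) = -t + 2*π by ring, Real.sin_add_two_pi, Real.sin_neg, mul_neg,
      Real.sin_neg]
  simp only [h2] at h
  rw [intervalIntegral.integral_neg] at h
  linarith

-- step 1
lemma step1 (c : ℝ) :
    B (c/2) ^ 2 = ∫ t in (0:ℝ)..(2*π), ∫ u in (0:ℝ)..(2*π),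
      Real.cos ((c/2) * Real.sin t) * Real.cos ((c/2) * Real.sin u) := by
  simp_rw [intervalIntegral.integral_const_mul, intervalIntegral.integral_mul_const]
  rw [← B, pow_two]

-- step 3 (reflection of the "+" term)
lemma step3 (c t : ℝ) :
    (∫ u in (0:ℝ)..(2*π), Real.cos ((c/2) * (Real.sin t + Real.sin u)))
      = ∫ u in (0:ℝ)..(2*π), Real.cos ((c/2) * (Real.sin t - Real.sin u)) := by
  have h := reflect_int (fun u => Real.cos ((c/2) * (Real.sin t + Real.sin u)))
  have h2 : ∀ u, Real.cos ((c/2) * (Real.sin t + Real.sin (2*π - u)))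
      = Real.cos ((c/2) * (Real.sin t - Real.sin u)) := by
    intro u
    rw [show (2*π - u) = -u + 2*π by ring, Real.sin_add_two_pi, Real.sin_neg]
    ring_nf
  simp only [h2] at h
  exact h.symm

lemma step5 (c : ℝ) :
    B (c/2) ^ 2 = ∫ t in (0:ℝ)..(2*π), ∫ u in (0:ℝ)..(2*π),
      Real.cos ((c/2) * (Real.sin t - Real.sin u)) := by
  rw [step1]
  apply intervalIntegral.integral_congr
  intro t _
  have h2 : ∀ u, Real.cos ((c/2) * Real.sin t) * Real.cos ((c/2) * Real.sin u)
      = (Real.cos ((c/2) * (Real.sin t - Real.sin u))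
          + Real.cos ((c/2) * (Real.sin t + Real.sin u))) / 2 := by
    intro u
    rw [mul_sub, mul_add, Real.cos_sub, Real.cos_add]
    ring
  simp only [h2]
  rw [intervalIntegral.integral_div, intervalIntegral.integral_add
    (by apply Continuous.intervalIntegrable; fun_prop)
    (by apply Continuous.intervalIntegrable; fun_prop), step3]
  ring

lemma step6 (c t : ℝ) :
    (∫ u in (0:ℝ)..(2*π), Real.cos ((c/2) * (Real.sin t - Real.sin u)))
      = ∫ v in (0:ℝ)..(2*π), Real.cos (c * Real.sin (v/2) * Real.cos (v/2 + t)) := by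
  have hper : Function.Periodic
      (fun v => Real.cos (c * Real.sin (v/2) * Real.cos (v/2 + t))) (2*π) := by
    intro v
    simp only
    have h1 : Real.sin ((v + 2*π)/2) = - Real.sin (v/2) := by
      rw [show (v + 2*π)/2 = v/2 + π by ring, Real.sin_add_pi]
    have h2 : Real.cos ((v + 2*π)/2 + t) = - Real.cos (v/2 + t) := by
      rw [show (v + 2*π)/2 + t = (v/2 + t) + π by ring, Real.cos_add_pi]
    rw [h1, h2]
    ring_nf
  have key := shift_int _ hper (-t)
  refine Eq.trans ?_ key
  apply intervalIntegral.integral_congr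
  intro u _
  simp only
  have h3 : Real.sin t - Real.sin u = -(2 * Real.sin ((u - t)/2) * Real.cos ((u + t)/2)) := by
    rw [Real.sin_sub_sin t u, show (u - t)/2 = -((t - u)/2) by ring, Real.sin_neg,
      show (u + t)/2 = (t + u)/2 by ring]
    ring
  rw [h3, show (c/2) * -(2 * Real.sin ((u - t)/2) * Real.cos ((u + t)/2))
      = -(c * Real.sin ((u - t)/2) * Real.cos ((u - t)/2 + t)) by ring_nf, Real.cos_neg]
  ring_nf

lemma step8 (c v : ℝ) :
    (∫ t in (0:ℝ)..(2*π), Real.cos (c * Real.sin (v/2) * Real.cos (v/2 + t)))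
      = B (c * Real.sin (v/2)) := by
  have hper : Function.Periodic
      (fun t => Real.cos (c * Real.sin (v/2) * Real.sin t)) (2*π) := by
    intro t
    simp only [Real.sin_add_two_pi]
  have key := shift_int _ hper (v/2 + π/2)
  refine Eq.trans ?_ key
  apply intervalIntegral.integral_congr
  intro u _
  simp only
  rw [show u + (v/2 + π/2) = (u + v/2) + π/2 by ring, Real.sin_add_pi_div_two]
  rw [add_comm (v/2) u]

lemma step10 (c : ℝ) :
    (∫ v in (0:ℝ)..(2*π), B (c * Real.sin (v/2)))
      = ∫ v in (0:ℝ)..(2*π), B (c * Real.sin v) := by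
  have hInt : ∀ a b : ℝ, IntervalIntegrable (fun v => B (c * Real.sin v)) volume a b := by
    intro a b
    apply Continuous.intervalIntegrable
    exact B_cont.comp (by fun_prop)
  have hdiv := intervalIntegral.integral_comp_div (a := (0:ℝ)) (b := 2*π)
    (c := (2:ℝ)) (fun w => B (c * Real.sin w)) two_ne_zero
  rw [hdiv]
  norm_num
  have hsplit := intervalIntegral.integral_add_adjacent_intervals
    (a := (0:ℝ)) (b := π) (c := 2*π) (hInt 0 π) (hInt π (2*π))
  have hshift : (∫ v in (0:ℝ)..π, B (c * Real.sin (v + π)))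
      = ∫ v in π..(2*π), B (c * Real.sin v) := by
    rw [intervalIntegral.integral_comp_add_right (fun v => B (c * Real.sin v)) π]
    norm_num [two_mul]
  have heven : ∀ v, B (c * Real.sin (v + π)) = B (c * Real.sin v) := by
    intro v
    rw [Real.sin_add_pi, mul_neg, B_neg]
  simp only [heven] at hshift
  rw [← hshift] at hsplit
  rw [← hsplit]
  ring_nf


noncomputable def myμ : Measure ℝ := volume.restrict (Set.Icc (0:ℝ) (2*π))
noncomputable def myν : Measure (ℝ×ℝ) := myμ.prod myμ

instance : IsFiniteMeasure myμ := by
  unfold myμ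
  constructor
  rw [Measure.restrict_apply_univ, Real.volume_Icc]
  exact ENNReal.ofReal_lt_top

instance : IsFiniteMeasure myν := by unfold myν; infer_instance

lemma myμ_integral (f : ℝ → ℝ) : ∫ x, f x ∂myμ = ∫ x in (0:ℝ)..(2*π), f x := by
  rw [myμ, intervalIntegral.integral_of_le (by positivity),
    ← MeasureTheory.integral_Icc_eq_integral_Ioc]

lemma myν_eq : myν = volume.restrict (Set.Icc (0:ℝ) (2*π) ×ˢ Set.Icc (0:ℝ) (2*π)) := by
  rw [myν, myμ, Measure.prod_restrict, Measure.volume_eq_prod]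

lemma integrable_myν (F : ℝ×ℝ → ℝ) (hF : Continuous F) : Integrable F myν := by
  rw [myν_eq]
  exact hF.continuousOn.integrableOn_compact (isCompact_Icc.prod isCompact_Icc)

lemma fub (F : ℝ×ℝ → ℝ) (hF : Continuous F) :
    ∫ y, F y ∂myν = ∫ t in (0:ℝ)..(2*π), ∫ u in (0:ℝ)..(2*π), F (t, u) := by
  rw [myν, MeasureTheory.integral_prod _ (integrable_myν F hF)]
  rw [myμ_integral]
  apply intervalIntegral.integral_congr
  intro t _
  exact myμ_integral _

lemma fub' (F : ℝ×ℝ → ℝ) (hF : Continuous F) :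
    ∫ y, F y ∂myν = ∫ u in (0:ℝ)..(2*π), ∫ t in (0:ℝ)..(2*π), F (t, u) := by
  rw [myν, MeasureTheory.integral_prod_symm _ (integrable_myν F hF)]
  rw [myμ_integral]
  apply intervalIntegral.integral_congr
  intro u _
  exact myμ_integral _

lemma swap2 (F : ℝ → ℝ → ℝ) (hF : Continuous (fun p : ℝ×ℝ => F p.1 p.2)) :
    ∫ t in (0:ℝ)..(2*π), ∫ u in (0:ℝ)..(2*π), F t u
      = ∫ u in (0:ℝ)..(2*π), ∫ t in (0:ℝ)..(2*π), F t u := by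
  rw [← fub _ hF, fub' _ hF]

lemma myν_univ_real : (myν Set.univ).toReal = (2*π)^2 := by
  rw [myν, ← Set.univ_prod_univ, Measure.prod_prod, myμ, Measure.restrict_apply_univ,
    Real.volume_Icc]
  rw [ENNReal.toReal_mul, ENNReal.toReal_ofReal (by linarith [Real.pi_pos])]
  ring


lemma cos_int (c : ℝ) :
    (∫ y : ℝ × ℝ, Real.cos (c * (Real.sin y.1 * Real.sin y.2)) ∂myν) = B (c/2) ^ 2 := by
  symm
  calc B (c/2) ^ 2
      = ∫ t in (0:ℝ)..(2*π), ∫ u in (0:ℝ)..(2*π),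
          Real.cos ((c/2) * (Real.sin t - Real.sin u)) := step5 c
    _ = ∫ t in (0:ℝ)..(2*π), ∫ v in (0:ℝ)..(2*π),
          Real.cos (c * Real.sin (v/2) * Real.cos (v/2 + t)) := by
        apply intervalIntegral.integral_congr
        intro t _
        exact step6 c t
    _ = ∫ v in (0:ℝ)..(2*π), ∫ t in (0:ℝ)..(2*π),
          Real.cos (c * Real.sin (v/2) * Real.cos (v/2 + t)) := by
        apply swap2 (fun t v => Real.cos (c * Real.sin (v/2) * Real.cos (v/2 + t)))
        fun_prop
    _ = ∫ v in (0:ℝ)..(2*π), B (c * Real.sin (v/2)) := by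
        apply intervalIntegral.integral_congr
        intro v _
        exact step8 c v
    _ = ∫ v in (0:ℝ)..(2*π), B (c * Real.sin v) := step10 c
    _ = ∫ v in (0:ℝ)..(2*π), ∫ t in (0:ℝ)..(2*π),
          Real.cos (c * (Real.sin v * Real.sin t)) := by
        apply intervalIntegral.integral_congr
        intro v _
        show B (c * Real.sin v) = _
        rw [show B (c * Real.sin v)
            = ∫ t in (0:ℝ)..(2*π), Real.cos ((c * Real.sin v) * Real.sin t) from rfl]
        apply intervalIntegral.integral_congr
        intro t _
        simp only [mul_assoc]
    _ = ∫ y : ℝ × ℝ, Real.cos (c * (Real.sin y.1 * Real.sin y.2)) ∂myν := by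
        rw [fub (fun y : ℝ × ℝ => Real.cos (c * (Real.sin y.1 * Real.sin y.2))) (by fun_prop)]

lemma sin_int (c : ℝ) :
    (∫ y : ℝ × ℝ, Real.sin (c * (Real.sin y.1 * Real.sin y.2)) ∂myν) = 0 := by
  rw [fub (fun y : ℝ × ℝ => Real.sin (c * (Real.sin y.1 * Real.sin y.2))) (by fun_prop)]
  have h : ∀ t, (∫ u in (0:ℝ)..(2*π), Real.sin (c * (Real.sin t * Real.sin u))) = 0 := by
    intro t
    simp only [← mul_assoc]
    exact odd_sin_int _
  simp only [h, intervalIntegral.integral_zero]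

lemma J0_B (x : ℝ) : B x = 2 * π * J₀ x := by
  rw [J₀, ← B]
  field_simp

instance (n : ℕ) : IsFiniteMeasure (Measure.pi fun _ : Fin n => myν) := by infer_instance

lemma P_univ (n : ℕ) :
    ((Measure.pi fun _ : Fin n => myν) Set.univ).toReal = (2*π)^(2*n) := by
  rw [← Set.pi_univ Set.univ, Measure.pi_pi, ENNReal.toReal_prod]
  simp only [myν_univ_real, Finset.prod_const, Finset.card_univ, Fintype.card_fin]
  rw [← pow_mul, mul_comm 2 n, pow_mul]

lemma pi_prod (n : ℕ) (g : Fin n → (ℝ×ℝ) → ℝ) :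
    (∫ x : Fin n → ℝ×ℝ, ∏ k, g k (x k) ∂(Measure.pi fun _ => myν))
      = ∏ k, ∫ y, g k y ∂myν := by
  letI : MeasureSpace (ℝ×ℝ) := ⟨myν⟩
  haveI : SigmaFinite (volume : Measure (ℝ×ℝ)) := inferInstanceAs (SigmaFinite myν)
  exact MeasureTheory.integral_fintype_prod_eq_prod (ι := Fin n) g

lemma offdiag_int (n : ℕ) (i j : Fin n) (hij : i ≠ j) (F : (ℝ×ℝ) → ℝ) :
    (∫ x : Fin n → ℝ×ℝ, F (x i) * F (x j) ∂(Measure.pi fun _ => myν))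
      = (∫ y, F y ∂myν)^2 * ((2*π)^2)^(n-2) := by
  classical
  set g : Fin n → (ℝ×ℝ) → ℝ := fun k y => if k = i then F y else if k = j then F y else 1 with hg
  have hprod : ∀ x : Fin n → ℝ×ℝ, F (x i) * F (x j) = ∏ k, g k (x k) := by
    intro x
    rw [← Finset.mul_prod_erase Finset.univ (fun k => g k (x k)) (Finset.mem_univ i),
      ← Finset.mul_prod_erase _ _ (Finset.mem_erase.2 ⟨hij.symm, Finset.mem_univ j⟩)]
    rw [Finset.prod_eq_one]
    · simp [hg, hij.symm]
    · intro k hk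
      simp only [Finset.mem_erase] at hk
      simp only [hg, if_neg hk.2.1, if_neg hk.1]
  simp only [hprod]
  rw [pi_prod]
  rw [← Finset.mul_prod_erase Finset.univ (fun k => ∫ y, g k y ∂myν) (Finset.mem_univ i),
    ← Finset.mul_prod_erase _ _ (Finset.mem_erase.2 ⟨hij.symm, Finset.mem_univ j⟩)]
  have h1 : (∫ y, g i y ∂myν) = ∫ y, F y ∂myν := by
    simp [hg]
  have h2 : (∫ y, g j y ∂myν) = ∫ y, F y ∂myν := by
    simp [hg, hij.symm]
  have h3 : (∏ k ∈ (Finset.univ.erase i).erase j, ∫ y, g k y ∂myν) = ((2*π)^2)^(n-2) := by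
    rw [Finset.prod_congr rfl (g := fun _ => (2*π)^2), Finset.prod_const]
    · congr 1
      rw [Finset.card_erase_of_mem (Finset.mem_erase.2 ⟨hij.symm, Finset.mem_univ j⟩),
        Finset.card_erase_of_mem (Finset.mem_univ i), Finset.card_univ, Fintype.card_fin]
      omega
    · intro k hk
      simp only [Finset.mem_erase] at hk
      simp only [hg, if_neg hk.2.1, if_neg hk.1]
      rw [integral_const, smul_eq_mul, mul_one, measureReal_def, myν_univ_real]
  rw [h1, h2, h3]
  ring

lemma integrable_P {n : ℕ} {f : (Fin n → ℝ×ℝ) → ℝ} (hc : Continuous f) {C : ℝ}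
    (hb : ∀ x, ‖f x‖ ≤ C) : Integrable f (Measure.pi fun _ : Fin n => myν) :=
  (integrable_const C).mono' hc.aestronglyMeasurable (Filter.Eventually.of_forall hb)

lemma term_int (n : ℕ) (c : ℝ) (i j : Fin n) (hij : i ≠ j) :
    (∫ x : Fin n → ℝ×ℝ, Real.cos (c * (Real.sin (x i).1 * Real.sin (x i).2
        - Real.sin (x j).1 * Real.sin (x j).2)) ∂(Measure.pi fun _ => myν))
      = (2*π)^(2*n) * (J₀ (c/2))^4 := by
  have h2 : 2 ≤ n := by
    by_contra h
    push_neg at h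
    interval_cases n
    · exact i.elim0
    · exact hij (Subsingleton.elim i j)
  have hpw : ∀ x : Fin n → ℝ×ℝ,
      Real.cos (c * (Real.sin (x i).1 * Real.sin (x i).2
        - Real.sin (x j).1 * Real.sin (x j).2))
      = (fun y : ℝ×ℝ => Real.cos (c * (Real.sin y.1 * Real.sin y.2))) (x i)
          * (fun y : ℝ×ℝ => Real.cos (c * (Real.sin y.1 * Real.sin y.2))) (x j)
        + (fun y : ℝ×ℝ => Real.sin (c * (Real.sin y.1 * Real.sin y.2))) (x i)
          * (fun y : ℝ×ℝ => Real.sin (c * (Real.sin y.1 * Real.sin y.2))) (x j) := by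
    intro x
    simp only
    rw [mul_sub, Real.cos_sub]
  simp only [hpw]
  rw [integral_add]
  · have hc := offdiag_int n i j hij (fun y : ℝ×ℝ => Real.cos (c * (Real.sin y.1 * Real.sin y.2)))
    have hs := offdiag_int n i j hij (fun y : ℝ×ℝ => Real.sin (c * (Real.sin y.1 * Real.sin y.2)))
    rw [hc, hs, cos_int, sin_int]
    rw [J0_B]
    have h4 : ((2*π)^2)^(n-2) = (2*π)^(2*n-4) := by
      rw [← pow_mul]
      congr 1
      omega
    rw [h4]
    have h5 : (2*π)^(2*n) = (2*π)^4 * (2*π)^(2*n-4) := by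
      rw [← pow_add]
      congr 1
      omega
    rw [h5]
    ring
  · apply integrable_P (by fun_prop) (C := 1)
    intro x
    simp only [norm_mul, Real.norm_eq_abs]
    calc |Real.cos _| * |Real.cos _| ≤ 1 * 1 :=
          mul_le_mul (Real.abs_cos_le_one _) (Real.abs_cos_le_one _) (abs_nonneg _) zero_le_one
      _ = 1 := by norm_num
  · apply integrable_P (by fun_prop) (C := 1)
    intro x
    simp only [norm_mul, Real.norm_eq_abs]
    calc |Real.sin _| * |Real.sin _| ≤ 1 * 1 :=
          mul_le_mul (Real.abs_sin_le_one _) (Real.abs_sin_le_one _) (abs_nonneg _) zero_le_one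
      _ = 1 := by norm_num

lemma gauss (m : ℕ) : (∑ s ∈ Finset.Icc 1 m, ((m:ℝ) + 1 - (s:ℕ))) = (m+1)*m/2 := by
  induction m with
  | zero => simp
  | succ m ih =>
    rw [Finset.sum_Icc_succ_top (by omega : 1 ≤ m + 1)]
    have h : ∀ s : ℕ, ((m+1:ℕ):ℝ) + 1 - (s:ℕ) = ((m:ℝ) + 1 - (s:ℕ)) + 1 := by
      intro s
      push_cast
      ring
    simp only [h]
    rw [Finset.sum_add_distrib, ih, Finset.sum_const, Nat.card_Icc]
    simp only [Nat.add_sub_cancel, nsmul_eq_mul, mul_one]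
    push_cast
    ring

theorem stmt_4 (a : ℝ) (nT nR : ℕ) (hR : 1 ≤ nR) :
    (1 / (2 * π)) ^ (2 * nT) *
      ∫ x : Fin nT → ℝ × ℝ,
        (∑ i : Fin nT, ∑ j : Fin nT, ∑ s ∈ Finset.Icc 1 (nR - 1),
          ((nR : ℝ) - s) * Real.cos ((s : ℝ) * a *
            (Real.sin (x i).1 * Real.sin (x i).2 -
             Real.sin (x j).1 * Real.sin (x j).2)))
        ∂(Measure.pi fun _ : Fin nT =>
            (volume.restrict (Set.Icc (0:ℝ) (2 * π))).prod
              (volume.restrict (Set.Icc (0:ℝ) (2 * π))))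
    = (nT : ℝ) * ((nR : ℝ) * ((nR : ℝ) - 1)) / 2 +
      (nT : ℝ) * ((nT : ℝ) - 1) *
        ∑ s ∈ Finset.Icc 1 (nR - 1), ((nR : ℝ) - s) * (J₀ ((s : ℝ) * a / 2)) ^ 4 := by
  classical
  have hmeas : (Measure.pi fun _ : Fin nT =>
      (volume.restrict (Set.Icc (0:ℝ) (2 * π))).prod
        (volume.restrict (Set.Icc (0:ℝ) (2 * π)))) = Measure.pi fun _ : Fin nT => myν := rfl
  rw [hmeas]
  rcases Nat.eq_zero_or_pos nT with h0 | hT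
  · subst h0
    simp
  -- integrability of atomic terms
  have hint : ∀ (i j : Fin nT) (s : ℕ), Integrable
      (fun x : Fin nT → ℝ×ℝ => ((nR : ℝ) - s) * Real.cos ((s : ℝ) * a *
        (Real.sin (x i).1 * Real.sin (x i).2 - Real.sin (x j).1 * Real.sin (x j).2)))
      (Measure.pi fun _ : Fin nT => myν) := by
    intro i j s
    apply integrable_P (by fun_prop) (C := |(nR : ℝ) - s|)
    intro x
    rw [norm_mul, Real.norm_eq_abs, Real.norm_eq_abs]
    calc |(nR : ℝ) - s| * |Real.cos _| ≤ |(nR : ℝ) - s| * 1 :=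
          mul_le_mul_of_nonneg_left (Real.abs_cos_le_one _) (abs_nonneg _)
      _ = _ := mul_one _
  rw [integral_finset_sum _ (fun i _ => integrable_finset_sum _
      (fun j _ => integrable_finset_sum _ (fun s _ => hint i j s)))]
  have push : ∀ i : Fin nT,
      (∫ x : Fin nT → ℝ×ℝ, (∑ j : Fin nT, ∑ s ∈ Finset.Icc 1 (nR - 1),
        ((nR : ℝ) - s) * Real.cos ((s : ℝ) * a *
          (Real.sin (x i).1 * Real.sin (x i).2 -
           Real.sin (x j).1 * Real.sin (x j).2))) ∂(Measure.pi fun _ : Fin nT => myν))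
      = ∑ j : Fin nT, ∑ s ∈ Finset.Icc 1 (nR - 1),
          ∫ x : Fin nT → ℝ×ℝ, ((nR : ℝ) - s) * Real.cos ((s : ℝ) * a *
            (Real.sin (x i).1 * Real.sin (x i).2 -
             Real.sin (x j).1 * Real.sin (x j).2)) ∂(Measure.pi fun _ : Fin nT => myν) := by
    intro i
    rw [integral_finset_sum _ (fun j _ => integrable_finset_sum _ (fun s _ => hint i j s))]
    exact Finset.sum_congr rfl fun j _ =>
      integral_finset_sum _ (fun s _ => hint i j s)
  simp only [push]
  have hval : ∀ (i j : Fin nT) (s : ℕ),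
      (∫ x : Fin nT → ℝ×ℝ, ((nR : ℝ) - s) * Real.cos ((s : ℝ) * a *
        (Real.sin (x i).1 * Real.sin (x i).2 -
         Real.sin (x j).1 * Real.sin (x j).2)) ∂(Measure.pi fun _ : Fin nT => myν))
      = ((nR : ℝ) - s) * ((2*π)^(2*nT) *
          (if i = j then 1 else (J₀ ((s : ℝ) * a / 2))^4)) := by
    intro i j s
    rw [MeasureTheory.integral_const_mul]
    congr 1
    by_cases hij : i = j
    · subst hij
      simp only [sub_self, mul_zero, Real.cos_zero, if_pos rfl]
      rw [MeasureTheory.integral_const, smul_eq_mul, mul_one, measureReal_def, P_univ]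
      simp
    · rw [if_neg hij]
      exact term_int nT ((s : ℝ) * a) i j hij
  simp only [hval]
  -- pull out the (2π)^(2nT) factor
  have hfactor : (∑ i : Fin nT, ∑ j : Fin nT, ∑ s ∈ Finset.Icc 1 (nR - 1),
      ((nR : ℝ) - s) * ((2*π)^(2*nT) * (if i = j then 1 else (J₀ ((s : ℝ) * a / 2))^4)))
      = (2*π)^(2*nT) * ∑ i : Fin nT, ∑ j : Fin nT, ∑ s ∈ Finset.Icc 1 (nR - 1),
          ((nR : ℝ) - s) * (if i = j then 1 else (J₀ ((s : ℝ) * a / 2))^4) := by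
    rw [Finset.mul_sum]
    refine Finset.sum_congr rfl fun i _ => ?_
    rw [Finset.mul_sum]
    refine Finset.sum_congr rfl fun j _ => ?_
    rw [Finset.mul_sum]
    refine Finset.sum_congr rfl fun s _ => ?_
    ring
  rw [hfactor, ← mul_assoc]
  have hK : (1 / (2*π))^(2*nT) * (2*π)^(2*nT) = 1 := by
    rw [← mul_pow, one_div_mul_cancel (by positivity : (2*π) ≠ 0), one_pow]
  rw [hK, one_mul]
  -- split diagonal / off-diagonal
  have hgauss : (∑ s ∈ Finset.Icc 1 (nR - 1), ((nR : ℝ) - s))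
      = (nR : ℝ) * ((nR : ℝ) - 1) / 2 := by
    have hcast : ((nR - 1 : ℕ) : ℝ) = (nR : ℝ) - 1 := by
      rw [Nat.cast_sub hR, Nat.cast_one]
    have hg := gauss (nR - 1)
    rw [hcast] at hg
    calc (∑ s ∈ Finset.Icc 1 (nR - 1), ((nR : ℝ) - s))
        = ∑ s ∈ Finset.Icc 1 (nR - 1), (((nR : ℝ) - 1) + 1 - s) := by
          refine Finset.sum_congr rfl fun s _ => ?_
          ring
      _ = ((nR : ℝ) - 1 + 1) * ((nR : ℝ) - 1) / 2 := hg
      _ = (nR : ℝ) * ((nR : ℝ) - 1) / 2 := by ring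
  have hsplit : ∀ i : Fin nT,
      (∑ j : Fin nT, ∑ s ∈ Finset.Icc 1 (nR - 1),
        ((nR : ℝ) - s) * (if i = j then 1 else (J₀ ((s : ℝ) * a / 2))^4))
      = (nR : ℝ) * ((nR : ℝ) - 1) / 2 +
        ((nT : ℝ) - 1) * ∑ s ∈ Finset.Icc 1 (nR - 1),
          ((nR : ℝ) - s) * (J₀ ((s : ℝ) * a / 2))^4 := by
    intro i
    rw [← Finset.add_sum_erase _ _ (Finset.mem_univ i)]
    congr 1
    · rw [← hgauss]
      refine Finset.sum_congr rfl fun s _ => ?_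
      rw [if_pos rfl, mul_one]
    · have : ∀ j ∈ Finset.univ.erase i,
          (∑ s ∈ Finset.Icc 1 (nR - 1),
            ((nR : ℝ) - s) * (if i = j then 1 else (J₀ ((s : ℝ) * a / 2))^4))
          = ∑ s ∈ Finset.Icc 1 (nR - 1), ((nR : ℝ) - s) * (J₀ ((s : ℝ) * a / 2))^4 := by
        intro j hj
        refine Finset.sum_congr rfl fun s _ => ?_
        rw [if_neg (fun h => (Finset.mem_erase.1 hj).1 h.symm)]
      rw [Finset.sum_congr rfl this, Finset.sum_const, Finset.card_erase_of_mem (Finset.mem_univ i),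
        Finset.card_univ, Fintype.card_fin, nsmul_eq_mul, Nat.cast_sub hT, Nat.cast_one]
  simp only [hsplit]
  rw [Finset.sum_const, Finset.card_univ, Fintype.card_fin, nsmul_eq_mul]
  ring
end

section
/- Let (θ₁, φ₁), (θ₂, φ₂), (θ₃, φ₃) be independent, each uniformly distributed on [0,2π]², and set hᵢ := sin θᵢ·sin φᵢ. Then for every real a, E[cos(a·(h₁ − h₃))·cos(a·(h₂ − h₃))] = (1/2)·J₀(a/2)⁴·(1 + J₀(a)²). -/
open Real MeasureTheory Finset

/-- Expectation over three independent pairs of angles, each uniform on `[0, 2π]²`. -/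
noncomputable def E6 (f : ℝ → ℝ → ℝ → ℝ → ℝ → ℝ → ℝ) : ℝ :=
  (1 / (2 * π) ^ 6) *
    ∫ θ₁ in (0:ℝ)..(2 * π), ∫ φ₁ in (0:ℝ)..(2 * π),
      ∫ θ₂ in (0:ℝ)..(2 * π), ∫ φ₂ in (0:ℝ)..(2 * π),
        ∫ θ₃ in (0:ℝ)..(2 * π), ∫ φ₃ in (0:ℝ)..(2 * π), f θ₁ φ₁ θ₂ φ₂ θ₃ φ₃


noncomputable def Cc (x : ℝ) : ℝ := ∫ t in (0:ℝ)..(2*π), Real.cos (x * Real.sin t)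

lemma Cc_even (x : ℝ) : Cc (-x) = Cc x := by
  unfold Cc; simp [neg_mul, Real.cos_neg]

lemma Cc_cont : Continuous Cc := by
  have : Continuous fun p : ℝ × ℝ => Real.cos (p.1 * Real.sin p.2) := by fun_prop
  exact intervalIntegral.continuous_parametric_intervalIntegral_of_continuous' (f := fun x t => Real.cos (x * Real.sin t)) this 0 (2*π)

-- periodic shift: ∫₀^{2π} f = ∫₀^{2π} f(x+d) when f periodic 2π
lemma shift_eq {f : ℝ → ℝ} (hf : Function.Periodic f (2*π)) (d : ℝ) :
    (∫ x in (0:ℝ)..(2*π), f (x + d)) = ∫ x in (0:ℝ)..(2*π), f x := by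
  rw [intervalIntegral.integral_comp_add_right, add_comm (2*π) d]
  simpa using hf.intervalIntegral_add_eq d 0

lemma sin_int_zero (c : ℝ) : (∫ t in (0:ℝ)..(2*π), Real.sin (c * Real.sin t)) = 0 := by
  have hper : Function.Periodic (fun t => Real.sin (c * Real.sin t)) (2*π) := by
    intro t; simp [Real.sin_add_two_pi]
  have h := shift_eq hper π
  simp only [Real.sin_add_pi, mul_neg, Real.sin_neg] at h
  rw [intervalIntegral.integral_neg] at h
  linarith

lemma L1 (x c : ℝ) : (∫ t in (0:ℝ)..(2*π), Real.cos (x - c * Real.sin t))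
    = Real.cos x * Cc c := by
  have : ∀ t : ℝ, Real.cos (x - c * Real.sin t)
      = Real.cos x * Real.cos (c * Real.sin t) + Real.sin x * Real.sin (c * Real.sin t) := by
    intro t; rw [Real.cos_sub]
  rw [intervalIntegral.integral_congr (g := fun t => Real.cos x * Real.cos (c * Real.sin t)
      + Real.sin x * Real.sin (c * Real.sin t)) (fun t _ => this t)]
  rw [intervalIntegral.integral_add (by apply Continuous.intervalIntegrable; fun_prop)
      (by apply Continuous.intervalIntegrable; fun_prop),
    intervalIntegral.integral_const_mul, intervalIntegral.integral_const_mul,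
    sin_int_zero]
  simp [Cc]

lemma L1' (x c : ℝ) : (∫ t in (0:ℝ)..(2*π), Real.cos (x + c * Real.sin t))
    = Real.cos x * Cc c := by
  have := L1 x (-c)
  simp only [neg_mul, sub_neg_eq_add, Cc_even] at this
  exact this

lemma swap_int {H : ℝ → ℝ → ℝ} (hH : Continuous (Function.uncurry H)) :
    (∫ u in (0:ℝ)..(2*π), ∫ w in (0:ℝ)..(2*π), H u w)
      = ∫ w in (0:ℝ)..(2*π), ∫ u in (0:ℝ)..(2*π), H u w := by
  have h2 : (0:ℝ) ≤ 2*π := by positivity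
  simp only [intervalIntegral.integral_of_le h2]
  apply MeasureTheory.integral_integral_swap
  rw [Measure.prod_restrict]
  exact (hH.continuousOn.integrableOn_compact ((isCompact_Icc (a := (0:ℝ)) (b := 2*π)).prod (isCompact_Icc (a := (0:ℝ)) (b := 2*π)))).mono_set
    (Set.prod_mono Set.Ioc_subset_Icc_self Set.Ioc_subset_Icc_self)

noncomputable def Ic (c : ℝ) : ℝ := ∫ t in (0:ℝ)..(2*π), Cc (c * Real.sin t)

lemma core (c : ℝ) : Ic c = (Cc (c/2))^2 := by
  -- Claim 6: Ic c = 2 * ∫₀^π Cc (c sin t)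
  have hCcont : Continuous fun t => Cc (c * Real.sin t) := Cc_cont.comp (by fun_prop)
  have hperπ : Function.Periodic (fun t => Cc (c * Real.sin t)) π := by
    intro t
    have : c * Real.sin (t + π) = -(c * Real.sin t) := by rw [Real.sin_add_pi]; ring
    simp only [this, Cc_even]
  have claim6 : Ic c = 2 * ∫ t in (0:ℝ)..π, Cc (c * Real.sin t) := by
    have hsplit : Ic c = (∫ t in (0:ℝ)..π, Cc (c * Real.sin t))
        + ∫ t in π..(2*π), Cc (c * Real.sin t) := by
      rw [Ic, ← intervalIntegral.integral_add_adjacent_intervals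
        (hCcont.intervalIntegrable 0 π) (hCcont.intervalIntegrable π (2*π))]
    have h2 : (∫ t in π..(2*π), Cc (c * Real.sin t)) = ∫ t in (0:ℝ)..π, Cc (c * Real.sin t) := by
      have := hperπ.intervalIntegral_add_eq π 0
      simpa [two_mul] using this
    rw [hsplit, h2]; ring
  -- Claim 5: 2 * ∫₀^π Cc(c sin t) = ∫₀^{2π} Cc (c sin (w/2)) dw
  have claim5 : (∫ w in (0:ℝ)..(2*π), Cc (c * Real.sin (w/2)))
      = 2 * ∫ t in (0:ℝ)..π, Cc (c * Real.sin t) := by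
    have := intervalIntegral.integral_comp_div (a := (0:ℝ)) (b := 2*π)
      (c := (2:ℝ)) (f := fun t => Cc (c * Real.sin t)) two_ne_zero
    rw [this]
    norm_num [mul_comm, smul_eq_mul]
  -- Claim 4: inner u-integral
  have claim4 : ∀ w : ℝ, (∫ u in (0:ℝ)..(2*π), Real.cos (c * Real.sin (w/2) * Real.cos (u - w/2)))
      = Cc (c * Real.sin (w/2)) := by
    intro w
    set b := c * Real.sin (w/2) with hb
    have hper : Function.Periodic (fun u => Real.cos (b * Real.sin u)) (2*π) := by
      intro u; simp [Real.sin_add_two_pi]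
    have key : ∀ u : ℝ, Real.cos (b * Real.cos (u - w/2))
        = (fun u => Real.cos (b * Real.sin u)) (u + (π/2 - w/2)) := by
      intro u
      have : Real.sin (u + (π/2 - w/2)) = Real.cos (u - w/2) := by
        rw [show u + (π/2 - w/2) = (u - w/2) + π/2 by ring, Real.sin_add_pi_div_two]
      simp [this]
    calc (∫ u in (0:ℝ)..(2*π), Real.cos (b * Real.cos (u - w/2)))
        = ∫ u in (0:ℝ)..(2*π), (fun u => Real.cos (b * Real.sin u)) (u + (π/2 - w/2)) := by
          exact intervalIntegral.integral_congr (fun u _ => key u)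
      _ = ∫ u in (0:ℝ)..(2*π), Real.cos (b * Real.sin u) := shift_eq hper _
      _ = Cc b := rfl
  -- Claim 3: Fubini
  have hHcont : Continuous (Function.uncurry
      (fun u w => Real.cos (c * Real.sin (w/2) * Real.cos (u - w/2)))) := by
    have h : Function.uncurry (fun u w => Real.cos (c * Real.sin (w/2) * Real.cos (u - w/2)))
        = fun p : ℝ × ℝ => Real.cos (c * Real.sin (p.2/2) * Real.cos (p.1 - p.2/2)) := rfl
    rw [h]; fun_prop
  have claim3 : (∫ u in (0:ℝ)..(2*π), ∫ w in (0:ℝ)..(2*π),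
        Real.cos (c * Real.sin (w/2) * Real.cos (u - w/2)))
      = ∫ w in (0:ℝ)..(2*π), Cc (c * Real.sin (w/2)) := by
    rw [swap_int hHcont]
    exact intervalIntegral.integral_congr (fun w _ => claim4 w)
  -- Claim 2: for fixed u, rewrite v-integral as w-integral
  have claim2 : ∀ u : ℝ, (∫ v in (0:ℝ)..(2*π), Real.cos (c/2 * (Real.sin u - Real.sin v)))
      = ∫ w in (0:ℝ)..(2*π), Real.cos (c * Real.sin (w/2) * Real.cos (u - w/2)) := by
    intro u
    have step1 : ∀ v : ℝ, Real.cos (c/2 * (Real.sin u - Real.sin v))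
        = (fun w => Real.cos (c * Real.sin (w/2) * Real.cos (u - w/2))) (u - v) := by
      intro v
      have h := Real.sin_sub_sin u v
      simp only
      rw [h]
      ring_nf
    have hgper : Function.Periodic
        (fun w => Real.cos (c * Real.sin (w/2) * Real.cos (u - w/2))) (2*π) := by
      intro w
      have h1 : Real.sin ((w + 2*π)/2) = -Real.sin (w/2) := by
        rw [show (w + 2*π)/2 = w/2 + π by ring, Real.sin_add_pi]
      have h2 : Real.cos (u - (w + 2*π)/2) = -Real.cos (u - w/2) := by
        rw [show u - (w + 2*π)/2 = (u - w/2) - π by ring, Real.cos_sub_pi]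
      simp only [h1, h2]
      ring_nf
    calc (∫ v in (0:ℝ)..(2*π), Real.cos (c/2 * (Real.sin u - Real.sin v)))
        = ∫ v in (0:ℝ)..(2*π),
            (fun w => Real.cos (c * Real.sin (w/2) * Real.cos (u - w/2))) (u - v) := by
          exact intervalIntegral.integral_congr (fun v _ => step1 v)
      _ = ∫ w in (u - 2*π)..(u - 0),
            Real.cos (c * Real.sin (w/2) * Real.cos (u - w/2)) :=
          intervalIntegral.integral_comp_sub_left (fun w => Real.cos (c * Real.sin (w/2) * Real.cos (u - w/2))) u
      _ = ∫ w in (0:ℝ)..(2*π), Real.cos (c * Real.sin (w/2) * Real.cos (u - w/2)) := by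
          have := hgper.intervalIntegral_add_eq (u - 2*π) 0
          simpa [sub_add_cancel] using this
  -- Claim 1: D = Cc(c/2)^2
  have claim1 : (∫ u in (0:ℝ)..(2*π), ∫ v in (0:ℝ)..(2*π),
        Real.cos (c/2 * (Real.sin u - Real.sin v))) = (Cc (c/2))^2 := by
    have inner : ∀ u : ℝ, (∫ v in (0:ℝ)..(2*π), Real.cos (c/2 * (Real.sin u - Real.sin v)))
        = Real.cos (c/2 * Real.sin u) * Cc (c/2) := by
      intro u
      have : ∀ v : ℝ, Real.cos (c/2 * (Real.sin u - Real.sin v))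
          = Real.cos (c/2 * Real.sin u - c/2 * Real.sin v) := by intro v; ring_nf
      rw [intervalIntegral.integral_congr (fun v _ => this v), L1]
    rw [intervalIntegral.integral_congr (fun u _ => inner u),
      intervalIntegral.integral_mul_const]
    rw [show (∫ u in (0:ℝ)..(2*π), Real.cos (c/2 * Real.sin u)) = Cc (c/2) from rfl]
    ring
  calc Ic c = 2 * ∫ t in (0:ℝ)..π, Cc (c * Real.sin t) := claim6
    _ = ∫ w in (0:ℝ)..(2*π), Cc (c * Real.sin (w/2)) := claim5.symm
    _ = ∫ u in (0:ℝ)..(2*π), ∫ w in (0:ℝ)..(2*π),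
          Real.cos (c * Real.sin (w/2) * Real.cos (u - w/2)) := claim3.symm
    _ = ∫ u in (0:ℝ)..(2*π), ∫ v in (0:ℝ)..(2*π),
          Real.cos (c/2 * (Real.sin u - Real.sin v)) := by
        exact (intervalIntegral.integral_congr (fun u _ => claim2 u)).symm
    _ = (Cc (c/2))^2 := claim1

lemma Cc_eq_J (x : ℝ) : Cc x = 2 * π * J₀ x := by
  have hπ : (2*π) ≠ 0 := by positivity
  rw [J₀]; field_simp [Cc]; rfl

section main
variable (a : ℝ)

lemma P3 (h₁ h₂ : ℝ) :
    (∫ θ₃ in (0:ℝ)..(2*π), ∫ φ₃ in (0:ℝ)..(2*π),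
      Real.cos (a*(h₁ - Real.sin θ₃ * Real.sin φ₃)) *
      Real.cos (a*(h₂ - Real.sin θ₃ * Real.sin φ₃)))
    = (2*π)^2 * ((1/2) * Real.cos (a*(h₁-h₂)))
      + (1/2) * Real.cos (a*(h₁+h₂)) * Ic (2*a) := by
  have inner : ∀ θ₃ : ℝ, (∫ φ₃ in (0:ℝ)..(2*π),
      Real.cos (a*(h₁ - Real.sin θ₃ * Real.sin φ₃)) *
      Real.cos (a*(h₂ - Real.sin θ₃ * Real.sin φ₃)))
      = (2*π) * ((1/2) * Real.cos (a*(h₁-h₂)))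
        + (1/2) * Real.cos (a*(h₁+h₂)) * Cc (2*a*Real.sin θ₃) := by
    intro θ₃
    have expand : ∀ φ : ℝ,
        Real.cos (a*(h₁ - Real.sin θ₃ * Real.sin φ)) *
        Real.cos (a*(h₂ - Real.sin θ₃ * Real.sin φ))
        = (1/2) * Real.cos (a*(h₁-h₂))
          + (1/2) * Real.cos (a*(h₁+h₂) - (2*a*Real.sin θ₃) * Real.sin φ) := by
      intro φ
      set A := a*(h₁ - Real.sin θ₃ * Real.sin φ)
      set B := a*(h₂ - Real.sin θ₃ * Real.sin φ)
      have e1 : a*(h₁-h₂) = A - B := by rw [show A - B = a*(h₁-h₂) by simp [A, B]; ring]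
      have e2 : a*(h₁+h₂) - (2*a*Real.sin θ₃) * Real.sin φ = A + B := by
        simp only [A, B]; ring
      rw [e1, e2, Real.cos_sub, Real.cos_add]; ring
    rw [intervalIntegral.integral_congr (fun φ _ => expand φ)]
    have i1 : IntervalIntegrable
        (fun φ => (1/2) * Real.cos (a*(h₁+h₂) - (2*a*Real.sin θ₃) * Real.sin φ))
        volume 0 (2*π) := (Continuous.intervalIntegrable (by fun_prop) 0 (2*π))
    rw [intervalIntegral.integral_add (intervalIntegrable_const) i1,
      intervalIntegral.integral_const, intervalIntegral.integral_const_mul,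
      L1 (a*(h₁+h₂)) (2*a*Real.sin θ₃)]
    simp [smul_eq_mul]; ring
  rw [intervalIntegral.integral_congr (fun θ₃ _ => inner θ₃)]
  have i2 : IntervalIntegrable
      (fun θ₃ => (1/2) * Real.cos (a*(h₁+h₂)) * Cc (2*a*Real.sin θ₃)) volume 0 (2*π) :=
    (Continuous.intervalIntegrable
      (continuous_const.mul (Cc_cont.comp (continuous_const.mul Real.continuous_sin))) 0 (2*π))
  rw [intervalIntegral.integral_add (intervalIntegrable_const) i2,
    intervalIntegral.integral_const, intervalIntegral.integral_const_mul]
  have : (∫ θ₃ in (0:ℝ)..(2*π), Cc (2*a*Real.sin θ₃)) = Ic (2*a) := rfl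
  rw [this]
  simp [smul_eq_mul]; ring

lemma P2 (h₁ : ℝ) :
    (∫ θ₂ in (0:ℝ)..(2*π), ∫ φ₂ in (0:ℝ)..(2*π),
      ((2*π)^2 * ((1/2) * Real.cos (a*(h₁ - Real.sin θ₂ * Real.sin φ₂)))
        + (1/2) * Real.cos (a*(h₁ + Real.sin θ₂ * Real.sin φ₂)) * Ic (2*a)))
    = ((2*π)^2 * (1/2) + (1/2) * Ic (2*a)) * Real.cos (a*h₁) * Ic a := by
  have inner : ∀ θ₂ : ℝ, (∫ φ₂ in (0:ℝ)..(2*π),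
      ((2*π)^2 * ((1/2) * Real.cos (a*(h₁ - Real.sin θ₂ * Real.sin φ₂)))
        + (1/2) * Real.cos (a*(h₁ + Real.sin θ₂ * Real.sin φ₂)) * Ic (2*a)))
      = ((2*π)^2 * (1/2) + (1/2) * Ic (2*a)) * Real.cos (a*h₁) * Cc (a*Real.sin θ₂) := by
    intro θ₂
    have expand : ∀ φ : ℝ,
        (2*π)^2 * ((1/2) * Real.cos (a*(h₁ - Real.sin θ₂ * Real.sin φ)))
          + (1/2) * Real.cos (a*(h₁ + Real.sin θ₂ * Real.sin φ)) * Ic (2*a)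
        = (2*π)^2 * (1/2) * Real.cos (a*h₁ - (a*Real.sin θ₂) * Real.sin φ)
          + (1/2) * Ic (2*a) * Real.cos (a*h₁ + (a*Real.sin θ₂) * Real.sin φ) := by
      intro φ
      rw [show a*(h₁ - Real.sin θ₂ * Real.sin φ) = a*h₁ - (a*Real.sin θ₂) * Real.sin φ by ring,
        show a*(h₁ + Real.sin θ₂ * Real.sin φ) = a*h₁ + (a*Real.sin θ₂) * Real.sin φ by ring]
      ring
    rw [intervalIntegral.integral_congr (fun φ _ => expand φ)]
    have i1 : IntervalIntegrable
        (fun φ => (2*π)^2 * (1/2) * Real.cos (a*h₁ - (a*Real.sin θ₂) * Real.sin φ))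
        volume 0 (2*π) := (Continuous.intervalIntegrable (by fun_prop) 0 (2*π))
    have i2 : IntervalIntegrable
        (fun φ => (1/2) * Ic (2*a) * Real.cos (a*h₁ + (a*Real.sin θ₂) * Real.sin φ))
        volume 0 (2*π) := (Continuous.intervalIntegrable (by fun_prop) 0 (2*π))
    rw [intervalIntegral.integral_add i1 i2,
      intervalIntegral.integral_const_mul, intervalIntegral.integral_const_mul,
      L1 (a*h₁) (a*Real.sin θ₂), L1' (a*h₁) (a*Real.sin θ₂)]
    ring
  rw [intervalIntegral.integral_congr (fun θ₂ _ => inner θ₂)]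
  rw [intervalIntegral.integral_const_mul]
  have : (∫ θ₂ in (0:ℝ)..(2*π), Cc (a*Real.sin θ₂)) = Ic a := rfl
  rw [this]

lemma P1 :
    (∫ θ₁ in (0:ℝ)..(2*π), ∫ φ₁ in (0:ℝ)..(2*π),
      (((2*π)^2 * (1/2) + (1/2) * Ic (2*a)) *
        Real.cos (a*(Real.sin θ₁ * Real.sin φ₁)) * Ic a))
    = ((2*π)^2 * (1/2) + (1/2) * Ic (2*a)) * Ic a * Ic a := by
  have inner : ∀ θ₁ : ℝ, (∫ φ₁ in (0:ℝ)..(2*π),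
      (((2*π)^2 * (1/2) + (1/2) * Ic (2*a)) *
        Real.cos (a*(Real.sin θ₁ * Real.sin φ₁)) * Ic a))
      = ((2*π)^2 * (1/2) + (1/2) * Ic (2*a)) * Ic a * Cc (a*Real.sin θ₁) := by
    intro θ₁
    have expand : ∀ φ : ℝ,
        ((2*π)^2 * (1/2) + (1/2) * Ic (2*a)) * Real.cos (a*(Real.sin θ₁ * Real.sin φ)) * Ic a
        = (((2*π)^2 * (1/2) + (1/2) * Ic (2*a)) * Ic a) *
            Real.cos (0 + (a*Real.sin θ₁) * Real.sin φ) := by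
      intro φ
      rw [show (0:ℝ) + (a*Real.sin θ₁) * Real.sin φ = a*(Real.sin θ₁ * Real.sin φ) by ring]
      ring
    rw [intervalIntegral.integral_congr (fun φ _ => expand φ),
      intervalIntegral.integral_const_mul, L1' 0 (a*Real.sin θ₁)]
    simp
  rw [intervalIntegral.integral_congr (fun θ₁ _ => inner θ₁),
    intervalIntegral.integral_const_mul]
  have : (∫ θ₁ in (0:ℝ)..(2*π), Cc (a*Real.sin θ₁)) = Ic a := rfl
  rw [this]

end main

theorem stmt_6 (a : ℝ) :
    E6 (fun θ₁ φ₁ θ₂ φ₂ θ₃ φ₃ =>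
      Real.cos (a * (Real.sin θ₁ * Real.sin φ₁ - Real.sin θ₃ * Real.sin φ₃)) *
      Real.cos (a * (Real.sin θ₂ * Real.sin φ₂ - Real.sin θ₃ * Real.sin φ₃)))
    = (1 / 2) * (J₀ (a / 2)) ^ 4 * (1 + (J₀ a) ^ 2) := by
  have hπ : π ≠ 0 := Real.pi_ne_zero
  have step1 : (∫ θ₁ in (0:ℝ)..(2*π), ∫ φ₁ in (0:ℝ)..(2*π),
      ∫ θ₂ in (0:ℝ)..(2*π), ∫ φ₂ in (0:ℝ)..(2*π),
        ∫ θ₃ in (0:ℝ)..(2*π), ∫ φ₃ in (0:ℝ)..(2*π),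
          Real.cos (a * (Real.sin θ₁ * Real.sin φ₁ - Real.sin θ₃ * Real.sin φ₃)) *
          Real.cos (a * (Real.sin θ₂ * Real.sin φ₂ - Real.sin θ₃ * Real.sin φ₃)))
      = ((2*π)^2 * (1/2) + (1/2) * Ic (2*a)) * Ic a * Ic a := by
    calc (∫ θ₁ in (0:ℝ)..(2*π), ∫ φ₁ in (0:ℝ)..(2*π),
        ∫ θ₂ in (0:ℝ)..(2*π), ∫ φ₂ in (0:ℝ)..(2*π),
          ∫ θ₃ in (0:ℝ)..(2*π), ∫ φ₃ in (0:ℝ)..(2*π),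
            Real.cos (a * (Real.sin θ₁ * Real.sin φ₁ - Real.sin θ₃ * Real.sin φ₃)) *
            Real.cos (a * (Real.sin θ₂ * Real.sin φ₂ - Real.sin θ₃ * Real.sin φ₃)))
        = ∫ θ₁ in (0:ℝ)..(2*π), ∫ φ₁ in (0:ℝ)..(2*π),
            ∫ θ₂ in (0:ℝ)..(2*π), ∫ φ₂ in (0:ℝ)..(2*π),
              ((2*π)^2 * ((1/2) * Real.cos (a*(Real.sin θ₁ * Real.sin φ₁
                  - Real.sin θ₂ * Real.sin φ₂)))
                + (1/2) * Real.cos (a*(Real.sin θ₁ * Real.sin φ₁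
                  + Real.sin θ₂ * Real.sin φ₂)) * Ic (2*a)) := by
          apply intervalIntegral.integral_congr; intro θ₁ _
          apply intervalIntegral.integral_congr; intro φ₁ _
          apply intervalIntegral.integral_congr; intro θ₂ _
          apply intervalIntegral.integral_congr; intro φ₂ _
          exact P3 a _ _
      _ = ∫ θ₁ in (0:ℝ)..(2*π), ∫ φ₁ in (0:ℝ)..(2*π),
            (((2*π)^2 * (1/2) + (1/2) * Ic (2*a)) *
              Real.cos (a*(Real.sin θ₁ * Real.sin φ₁)) * Ic a) := by
          apply intervalIntegral.integral_congr; intro θ₁ _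
          apply intervalIntegral.integral_congr; intro φ₁ _
          exact P2 a _
      _ = ((2*π)^2 * (1/2) + (1/2) * Ic (2*a)) * Ic a * Ic a := P1 a
  rw [E6, step1]
  have e1 : Ic a = (2 * π * J₀ (a/2))^2 := by rw [core, Cc_eq_J]
  have e2 : Ic (2*a) = (2 * π * J₀ a)^2 := by
    rw [core, Cc_eq_J, show (2*a)/2 = a by ring]
  rw [e1, e2]
  field_simp
end

section
/- Let (θ₁, φ₁), (θ₂, φ₂), (θ₃, φ₃) be independent, each uniformly distributed on [0,2π]², and set hᵢ := sin θᵢ·sin φᵢ. Then for every real a and all real s₁, s₂, E[cos(s₁·a·(h₁ − h₃) − s₂·a·(h₂ − h₃))] = J₀(s₁·a/2)² · J₀(s₂·a/2)² · J₀((s₁ − s₂)·a/2)². -/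
open Real MeasureTheory Finset

lemma int_per {f : ℝ → ℝ} (hf : Function.Periodic f (2*π)) (a : ℝ) :
    (∫ t in a..(a+2*π), f t) = ∫ t in (0:ℝ)..(2*π), f t := by
  simpa using hf.intervalIntegral_add_eq a 0

lemma int_two_per {f : ℝ → ℝ} (hc : Continuous f) (hf : Function.Periodic f (2*π)) (a : ℝ) :
    (∫ t in a..(a+2*(2*π)), f t) = 2 * ∫ t in (0:ℝ)..(2*π), f t := by
  have h := intervalIntegral.integral_add_adjacent_intervals (μ := volume)
    (a := a) (b := a + 2*π) (c := a + 2*(2*π))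
    (hc.intervalIntegrable _ _) (hc.intervalIntegrable _ _)
  rw [← h, int_per hf a, show a + 2*(2*π) = (a + 2*π) + 2*π by ring, int_per hf (a+2*π)]
  ring

lemma per_cos_sin (u : ℝ) : Function.Periodic (fun t => Real.cos (u * Real.sin t)) (2*π) :=
  fun t => by simp [Real.sin_add_two_pi]

lemma per_cos_cos (u : ℝ) : Function.Periodic (fun t => Real.cos (u * Real.cos t)) (2*π) :=
  fun t => by simp [Real.cos_add_two_pi]

lemma per_sin_cos (u : ℝ) : Function.Periodic (fun t => Real.sin (u * Real.cos t)) (2*π) :=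
  fun t => by simp [Real.cos_add_two_pi]

lemma int_sin_sin (k : ℝ) : (∫ t in (0:ℝ)..(2*π), Real.sin (k * Real.sin t)) = 0 := by
  have hc : Continuous fun t => Real.sin (k * Real.sin t) := by continuity
  have h := intervalIntegral.integral_add_adjacent_intervals (μ := volume)
    (a := (0:ℝ)) (b := π) (c := 2*π)
    (hc.intervalIntegrable _ _) (hc.intervalIntegrable _ _)
  have h2 : (∫ t in π..(2*π), Real.sin (k * Real.sin t))
      = ∫ t in (0:ℝ)..π, Real.sin (k * Real.sin (t + π)) := by
    rw [intervalIntegral.integral_comp_add_right (fun t => Real.sin (k * Real.sin t)) π]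
    norm_num [two_mul]
  have h3 : (∫ t in (0:ℝ)..π, Real.sin (k * Real.sin (t + π)))
      = - ∫ t in (0:ℝ)..π, Real.sin (k * Real.sin t) := by
    rw [← intervalIntegral.integral_neg]
    congr 1; ext t; simp [Real.sin_add_pi, mul_neg, Real.sin_neg]
  rw [h2, h3] at h
  linarith [h]

lemma int_sin_cos (u : ℝ) : (∫ t in (0:ℝ)..(2*π), Real.sin (u * Real.cos t)) = 0 := by
  have hc : Continuous fun t => Real.sin (u * Real.cos t) := by continuity
  have h := intervalIntegral.integral_add_adjacent_intervals (μ := volume)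
    (a := (0:ℝ)) (b := π) (c := 2*π)
    (hc.intervalIntegrable _ _) (hc.intervalIntegrable _ _)
  have h2 : (∫ t in π..(2*π), Real.sin (u * Real.cos t))
      = ∫ t in (0:ℝ)..π, Real.sin (u * Real.cos (t + π)) := by
    rw [intervalIntegral.integral_comp_add_right (fun t => Real.sin (u * Real.cos t)) π]
    norm_num [two_mul]
  have h3 : (∫ t in (0:ℝ)..π, Real.sin (u * Real.cos (t + π)))
      = - ∫ t in (0:ℝ)..π, Real.sin (u * Real.cos t) := by
    rw [← intervalIntegral.integral_neg]
    congr 1; ext t; simp [Real.cos_add_pi, mul_neg, Real.sin_neg]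
  rw [h2, h3] at h
  linarith [h]

lemma int_cos_cos (u : ℝ) : (∫ t in (0:ℝ)..(2*π), Real.cos (u * Real.cos t)) = 2*π*(J₀ u) := by
  have h : (∫ t in (0:ℝ)..(2*π), Real.cos (u * Real.sin (t + π/2)))
      = ∫ t in (0+π/2:ℝ)..(2*π+π/2), Real.cos (u * Real.sin t) :=
    intervalIntegral.integral_comp_add_right (fun t => Real.cos (u * Real.sin t)) (π/2)
  simp only [Real.sin_add_pi_div_two] at h
  rw [h, show (0+π/2:ℝ) = π/2 by ring, show (2*π+π/2:ℝ) = π/2 + 2*π by ring,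
    int_per (per_cos_sin u) (π/2), J₀]
  have hπ : (2*π) ≠ 0 := by positivity
  field_simp

lemma J₀_neg (y : ℝ) : J₀ (-y) = J₀ y := by
  simp [J₀, neg_mul, Real.cos_neg]

lemma box_swap {H : ℝ → ℝ → ℝ} (hH : Continuous (Function.uncurry H)) (a b : ℝ) (hab : a ≤ b) :
    (∫ x in a..b, ∫ y in a..b, H x y) = ∫ y in a..b, ∫ x in a..b, H x y := by
  simp only [intervalIntegral.integral_of_le hab]
  apply MeasureTheory.integral_integral_swap
  rw [Measure.prod_restrict]
  exact (hH.continuousOn.integrableOn_compact (isCompact_Icc.prod isCompact_Icc)).mono_set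
    (Set.prod_mono Set.Ioc_subset_Icc_self Set.Ioc_subset_Icc_self)

lemma int_dilate (F : ℝ → ℝ) (hF : Continuous F) (hFp : Function.Periodic F (2*π)) (x : ℝ) :
    (∫ θ in (0:ℝ)..(2*π), F (2*θ - x)) = ∫ t in (0:ℝ)..(2*π), F t := by
  rw [intervalIntegral.integral_comp_mul_sub F two_ne_zero x,
    show (2*0 - x : ℝ) = -x by ring, show (2*(2*π) - x : ℝ) = -x + 2*(2*π) by ring,
    int_two_per hF hFp (-x)]
  simp [smul_eq_mul]

lemma conv2 (F G F' G' : ℝ → ℝ) (hF : Continuous F) (hG : Continuous G)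
    (hF' : Continuous F') (hG' : Continuous G')
    (hFp : Function.Periodic F (2*π)) (hGp : Function.Periodic G (2*π))
    (hF'p : Function.Periodic F' (2*π)) (hG'p : Function.Periodic G' (2*π)) :
    (∫ θ in (0:ℝ)..(2*π), ∫ φ in (0:ℝ)..(2*π),
        (F (θ-φ) * G (θ+φ) + F' (θ-φ) * G' (θ+φ)))
      = (∫ t in (0:ℝ)..(2*π), F t) * (∫ t in (0:ℝ)..(2*π), G t)
        + (∫ t in (0:ℝ)..(2*π), F' t) * (∫ t in (0:ℝ)..(2*π), G' t) := by
  have step1 : ∀ θ : ℝ, (∫ φ in (0:ℝ)..(2*π), (F (θ-φ) * G (θ+φ) + F' (θ-φ) * G' (θ+φ)))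
      = ∫ x in (0:ℝ)..(2*π), (F (2*θ-x) * G x + F' (2*θ-x) * G' x) := by
    intro θ
    have e : ∀ φ : ℝ, (F (θ-φ) * G (θ+φ) + F' (θ-φ) * G' (θ+φ))
        = (fun x => F (2*θ-x) * G x + F' (2*θ-x) * G' x) (θ + φ) := by
      intro φ
      simp only [show 2*θ - (θ+φ) = θ - φ by ring]
    simp only [e]
    rw [intervalIntegral.integral_comp_add_left (fun x => F (2*θ-x) * G x + F' (2*θ-x) * G' x) θ]
    have hper : Function.Periodic (fun x => F (2*θ-x) * G x + F' (2*θ-x) * G' x) (2*π) := by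
      intro x
      simp only [show 2*θ - (x + 2*π) = (2*θ - x) - 2*π by ring, hFp.sub_eq, hF'p.sub_eq,
        hGp x, hG'p x]
    simpa using int_per hper θ
  rw [intervalIntegral.integral_congr
    (g := fun θ => ∫ x in (0:ℝ)..(2*π), (F (2*θ-x) * G x + F' (2*θ-x) * G' x))
    (fun θ _ => step1 θ)]
  rw [box_swap (H := fun θ x => F (2*θ-x) * G x + F' (2*θ-x) * G' x)
    (by fun_prop) 0 (2*π) (by positivity)]
  have step3 : ∀ x : ℝ, (∫ θ in (0:ℝ)..(2*π), (F (2*θ-x) * G x + F' (2*θ-x) * G' x))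
      = (∫ t in (0:ℝ)..(2*π), F t) * G x + (∫ t in (0:ℝ)..(2*π), F' t) * G' x := by
    intro x
    rw [intervalIntegral.integral_add
      (Continuous.intervalIntegrable (by fun_prop) _ _)
      (Continuous.intervalIntegrable (by fun_prop) _ _),
      intervalIntegral.integral_mul_const, intervalIntegral.integral_mul_const,
      int_dilate F hF hFp x, int_dilate F' hF' hF'p x]
  simp only [step3]
  rw [intervalIntegral.integral_add (f := fun y => (∫ t in (0:ℝ)..(2*π), F t) * G y)
    (g := fun y => (∫ t in (0:ℝ)..(2*π), F' t) * G' y)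
    ((continuous_const.mul hG).intervalIntegrable _ _)
    ((continuous_const.mul hG').intervalIntegrable _ _),
    intervalIntegral.integral_const_mul, intervalIntegral.integral_const_mul]

lemma double_cos (x : ℝ) :
    (∫ θ in (0:ℝ)..(2*π), ∫ φ in (0:ℝ)..(2*π), Real.cos (x * (Real.sin θ * Real.sin φ)))
      = (2*π)^2 * (J₀ (x/2))^2 := by
  have key : ∀ θ φ : ℝ, Real.cos (x * (Real.sin θ * Real.sin φ))
      = ((fun w => Real.cos (x/2 * Real.cos w)) (θ-φ) * (fun w => Real.cos (x/2 * Real.cos w)) (θ+φ)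
        + (fun w => Real.sin (x/2 * Real.cos w)) (θ-φ) * (fun w => Real.sin (x/2 * Real.cos w)) (θ+φ)) := by
    intro θ φ
    simp only
    rw [← Real.cos_sub]
    congr 1
    rw [Real.cos_sub, Real.cos_add]; ring
  simp only [key]
  rw [conv2 _ _ _ _ (by continuity) (by continuity) (by continuity) (by continuity)
    (per_cos_cos _) (per_cos_cos _) (per_sin_cos _) (per_sin_cos _),
    int_cos_cos (x/2), int_sin_cos (x/2)]
  ring

lemma pair (c x : ℝ) :
    (∫ θ in (0:ℝ)..(2*π), ∫ φ in (0:ℝ)..(2*π), Real.cos (c + x * (Real.sin θ * Real.sin φ)))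
      = (2*π)^2 * (J₀ (x/2))^2 * Real.cos c := by
  have inner : ∀ θ : ℝ, (∫ φ in (0:ℝ)..(2*π), Real.cos (c + x * (Real.sin θ * Real.sin φ)))
      = Real.cos c * ∫ φ in (0:ℝ)..(2*π), Real.cos (x * (Real.sin θ * Real.sin φ)) := by
    intro θ
    have e : ∀ φ : ℝ, Real.cos (c + x * (Real.sin θ * Real.sin φ))
        = Real.cos c * Real.cos (x * (Real.sin θ * Real.sin φ))
          - Real.sin c * Real.sin ((x * Real.sin θ) * Real.sin φ) := by
      intro φ
      rw [Real.cos_add, show (x * Real.sin θ) * Real.sin φ = x * (Real.sin θ * Real.sin φ) by ring]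
    simp only [e]
    rw [intervalIntegral.integral_sub
      (Continuous.intervalIntegrable (by fun_prop) _ _)
      (Continuous.intervalIntegrable (by fun_prop) _ _),
      intervalIntegral.integral_const_mul, intervalIntegral.integral_const_mul,
      int_sin_sin (x * Real.sin θ)]
    ring
  simp only [inner]
  rw [intervalIntegral.integral_const_mul, double_cos x]
  ring


theorem stmt_8 (a s₁ s₂ : ℝ) :
    E6 (fun θ₁ φ₁ θ₂ φ₂ θ₃ φ₃ =>
      Real.cos (s₁ * a * (Real.sin θ₁ * Real.sin φ₁ - Real.sin θ₃ * Real.sin φ₃) -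
        s₂ * a * (Real.sin θ₂ * Real.sin φ₂ - Real.sin θ₃ * Real.sin φ₃)))
    = (J₀ (s₁ * a / 2)) ^ 2 * (J₀ (s₂ * a / 2)) ^ 2 * (J₀ ((s₁ - s₂) * a / 2)) ^ 2 := by
  have h3 : ∀ θ₁ φ₁ θ₂ φ₂ : ℝ,
      (∫ θ₃ in (0:ℝ)..(2*π), ∫ φ₃ in (0:ℝ)..(2*π),
        Real.cos (s₁ * a * (Real.sin θ₁ * Real.sin φ₁ - Real.sin θ₃ * Real.sin φ₃) -
          s₂ * a * (Real.sin θ₂ * Real.sin φ₂ - Real.sin θ₃ * Real.sin φ₃)))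
      = (2*π)^2 * (J₀ (((s₂ - s₁)*a)/2))^2 *
          Real.cos (s₁ * a * (Real.sin θ₁ * Real.sin φ₁) - s₂ * a * (Real.sin θ₂ * Real.sin φ₂)) := by
    intro θ₁ φ₁ θ₂ φ₂
    have e : ∀ θ₃ φ₃ : ℝ, (s₁ * a * (Real.sin θ₁ * Real.sin φ₁ - Real.sin θ₃ * Real.sin φ₃) -
          s₂ * a * (Real.sin θ₂ * Real.sin φ₂ - Real.sin θ₃ * Real.sin φ₃))
        = (s₁ * a * (Real.sin θ₁ * Real.sin φ₁) - s₂ * a * (Real.sin θ₂ * Real.sin φ₂))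
          + ((s₂ - s₁)*a) * (Real.sin θ₃ * Real.sin φ₃) := fun θ₃ φ₃ => by ring
    simp only [e]
    exact pair _ _
  have h2 : ∀ θ₁ φ₁ : ℝ,
      (∫ θ₂ in (0:ℝ)..(2*π), ∫ φ₂ in (0:ℝ)..(2*π),
        Real.cos (s₁ * a * (Real.sin θ₁ * Real.sin φ₁) - s₂ * a * (Real.sin θ₂ * Real.sin φ₂)))
      = (2*π)^2 * (J₀ ((-s₂*a)/2))^2 * Real.cos (s₁ * a * (Real.sin θ₁ * Real.sin φ₁)) := by
    intro θ₁ φ₁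
    have e : ∀ θ₂ φ₂ : ℝ,
        (s₁ * a * (Real.sin θ₁ * Real.sin φ₁) - s₂ * a * (Real.sin θ₂ * Real.sin φ₂))
        = (s₁ * a * (Real.sin θ₁ * Real.sin φ₁)) + (-s₂*a) * (Real.sin θ₂ * Real.sin φ₂) :=
      fun _ _ => by ring
    simp only [e]
    exact pair _ _
  have h1 : (∫ θ₁ in (0:ℝ)..(2*π), ∫ φ₁ in (0:ℝ)..(2*π),
        Real.cos (s₁ * a * (Real.sin θ₁ * Real.sin φ₁)))
      = (2*π)^2 * (J₀ ((s₁*a)/2))^2 := by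
    have p := pair 0 (s₁*a)
    rw [Real.cos_zero, mul_one] at p
    simp only [zero_add] at p
    exact p
  set K3 := (2*π)^2 * (J₀ (((s₂ - s₁)*a)/2))^2 with hK3
  set K2 := (2*π)^2 * (J₀ ((-s₂*a)/2))^2 with hK2
  have A : ∀ θ₁ φ₁ : ℝ,
      (∫ θ₂ in (0:ℝ)..(2*π), ∫ φ₂ in (0:ℝ)..(2*π),
        ∫ θ₃ in (0:ℝ)..(2*π), ∫ φ₃ in (0:ℝ)..(2*π),
        Real.cos (s₁ * a * (Real.sin θ₁ * Real.sin φ₁ - Real.sin θ₃ * Real.sin φ₃) -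
          s₂ * a * (Real.sin θ₂ * Real.sin φ₂ - Real.sin θ₃ * Real.sin φ₃)))
      = K3 * (K2 * Real.cos (s₁ * a * (Real.sin θ₁ * Real.sin φ₁))) := by
    intro θ₁ φ₁
    have step : (∫ θ₂ in (0:ℝ)..(2*π), ∫ φ₂ in (0:ℝ)..(2*π),
        ∫ θ₃ in (0:ℝ)..(2*π), ∫ φ₃ in (0:ℝ)..(2*π),
        Real.cos (s₁ * a * (Real.sin θ₁ * Real.sin φ₁ - Real.sin θ₃ * Real.sin φ₃) -
          s₂ * a * (Real.sin θ₂ * Real.sin φ₂ - Real.sin θ₃ * Real.sin φ₃)))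
        = ∫ θ₂ in (0:ℝ)..(2*π), ∫ φ₂ in (0:ℝ)..(2*π),
          K3 * Real.cos (s₁ * a * (Real.sin θ₁ * Real.sin φ₁) -
            s₂ * a * (Real.sin θ₂ * Real.sin φ₂)) := by
      apply intervalIntegral.integral_congr; intro θ₂ _
      apply intervalIntegral.integral_congr; intro φ₂ _
      exact h3 θ₁ φ₁ θ₂ φ₂
    rw [step]
    simp only [intervalIntegral.integral_const_mul]
    rw [h2 θ₁ φ₁]
  have B : (∫ θ₁ in (0:ℝ)..(2*π), ∫ φ₁ in (0:ℝ)..(2*π),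
      ∫ θ₂ in (0:ℝ)..(2*π), ∫ φ₂ in (0:ℝ)..(2*π),
        ∫ θ₃ in (0:ℝ)..(2*π), ∫ φ₃ in (0:ℝ)..(2*π),
        Real.cos (s₁ * a * (Real.sin θ₁ * Real.sin φ₁ - Real.sin θ₃ * Real.sin φ₃) -
          s₂ * a * (Real.sin θ₂ * Real.sin φ₂ - Real.sin θ₃ * Real.sin φ₃)))
      = K3 * (K2 * ((2*π)^2 * (J₀ ((s₁*a)/2))^2)) := by
    have step : (∫ θ₁ in (0:ℝ)..(2*π), ∫ φ₁ in (0:ℝ)..(2*π),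
      ∫ θ₂ in (0:ℝ)..(2*π), ∫ φ₂ in (0:ℝ)..(2*π),
        ∫ θ₃ in (0:ℝ)..(2*π), ∫ φ₃ in (0:ℝ)..(2*π),
        Real.cos (s₁ * a * (Real.sin θ₁ * Real.sin φ₁ - Real.sin θ₃ * Real.sin φ₃) -
          s₂ * a * (Real.sin θ₂ * Real.sin φ₂ - Real.sin θ₃ * Real.sin φ₃)))
        = ∫ θ₁ in (0:ℝ)..(2*π), ∫ φ₁ in (0:ℝ)..(2*π),
          K3 * (K2 * Real.cos (s₁ * a * (Real.sin θ₁ * Real.sin φ₁))) := by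
      apply intervalIntegral.integral_congr; intro θ₁ _
      apply intervalIntegral.integral_congr; intro φ₁ _
      exact A θ₁ φ₁
    rw [step]
    simp only [intervalIntegral.integral_const_mul]
    rw [h1]
  rw [E6, B]
  have e2 : J₀ ((-s₂*a)/2) = J₀ (s₂ * a / 2) := by
    rw [show ((-s₂*a)/2 : ℝ) = -(s₂*a/2) by ring, J₀_neg]
  have e3 : J₀ (((s₂ - s₁)*a)/2) = J₀ ((s₁ - s₂) * a / 2) := by
    rw [show (((s₂ - s₁)*a)/2 : ℝ) = -((s₁-s₂)*a/2) by ring, J₀_neg]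
  rw [hK3, hK2, e2, e3]
  have hπ : (2*π) ≠ 0 := by positivity
  field_simp
end
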